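/- Let C be a code of length n over an alphabet of size q ≥ 2 and let ℓ and τ be positive integers such that: (1) ℓ divides τ, ℓ > 1, and 2τ ≤ n; (2) there is a decoder for C that detects any single τ-burst error; and (3) there is an (ℓ,τ)-burst list decoder for C. Then the redundancy r = n − log_q |C| of C satisfies r > (1 + 1/ℓ)·τ − log_q ℓ; equivalently, |C| < ℓ · q^{n − (1+1/ℓ)τ}. -/

import Mathlib

/-- A word `e ∈ F^n` is a `τ`-burst if its support is contained in `τ`
consecutive positions (equivalently, `e = 0` or the first and last nonzero
indexes `i ≤ j` satisfy `j - i < τ`). -/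
def IsBurst {F : Type*} [Zero F] {n : ℕ} (τ : ℕ) (e : Fin n → F) : Prop :=
  ∃ a : ℕ, ∀ j : Fin n, e j ≠ 0 → a ≤ (j : ℕ) ∧ (j : ℕ) < a + τ

/-- A decoder `D` (returning lists, i.e. finite sets, of codewords) corrects any
single `τ`-burst error. -/
def Corrects {F : Type*} [AddCommGroup F] {n : ℕ}
    (D : (Fin n → F) → Finset (Fin n → F)) (C : Set (Fin n → F)) (τ : ℕ) : Prop :=
  ∀ c ∈ C, ∀ e : Fin n → F, IsBurst τ e → c ∈ D (c + e)

/-- A decoder `D` detects any single `τ`-burst error: on input `c + e` it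
returns `{c}` if `e = 0` and `∅` otherwise. -/
def Detects {F : Type*} [AddCommGroup F] {n : ℕ}
    (D : (Fin n → F) → Finset (Fin n → F)) (C : Set (Fin n → F)) (τ : ℕ) : Prop :=
  ∀ c ∈ C, ∀ e : Fin n → F, IsBurst τ e →
    (e = 0 → D (c + e) = {c}) ∧ (e ≠ 0 → D (c + e) = ∅)

/-- `C` has an `(ℓ,τ)`-burst list decoder: a decoder with lists of codewords of
size at most `ℓ` that corrects any single `τ`-burst error. -/
def HasBurstListDecoder {F : Type*} [AddCommGroup F] {n : ℕ}
    (C : Set (Fin n → F)) (ℓ τ : ℕ) : Prop :=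
  ∃ D : (Fin n → F) → Finset (Fin n → F),
    (∀ y, (D y : Set (Fin n → F)) ⊆ C) ∧ (∀ y, (D y).card ≤ ℓ) ∧ Corrects D C τ

/-- `C` has a decoder detecting any single `τ`-burst error. -/
def HasBurstDetector {F : Type*} [AddCommGroup F] {n : ℕ}
    (C : Set (Fin n → F)) (τ : ℕ) : Prop :=
  ∃ D : (Fin n → F) → Finset (Fin n → F),
    (∀ y, (D y : Set (Fin n → F)) ⊆ C) ∧ Detects D C τ

/- ====================  Auxiliary machinery  ==================== -/

/-- A chain of `k` codewords ending at `c`, where consecutive codewords differ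
only inside the staggered windows `[i·b, (i+1)·b + τ)`. -/
def ChainR {F : Type*} [AddCommGroup F] {n : ℕ} (C : Set (Fin n → F)) (b τ : ℕ)
    (k : ℕ) (c : Fin n → F) : Prop :=
  ∃ f : ℕ → Fin n → F, f k = c ∧ (∀ i ≤ k, f i ∈ C) ∧
    ∀ i < k, f i ≠ f (i + 1) ∧
      ∀ j : Fin n, f i j ≠ f (i + 1) j → i * b ≤ (j : ℕ) ∧ (j : ℕ) < (i + 1) * b + τ

/-- Cross-differences of chain elements lie in the union of the two windows,
which is the interval `[i·b, j·b + τ)`. -/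
lemma chain_cross {F : Type*} [AddCommGroup F] {n : ℕ} (b τ : ℕ)
    (f : ℕ → Fin n → F) (k : ℕ)
    (hf : ∀ i < k, ∀ j : Fin n, f i j ≠ f (i + 1) j →
      i * b ≤ (j : ℕ) ∧ (j : ℕ) < (i + 1) * b + τ) :
    ∀ i j, i < j → j ≤ k → ∀ p : Fin n, f i p ≠ f j p →
      i * b ≤ (p : ℕ) ∧ (p : ℕ) < j * b + τ := by
  intro i j hij
  induction j, hij using Nat.le_induction with
  | base =>
      intro hjk p hp
      exact hf i (by omega) p hp
  | succ j hij ih =>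
      intro hjk p hp
      have hmul : j * b ≤ (j + 1) * b := mul_le_mul_left (by omega) b
      by_cases hc : f i p = f j p
      · have h2 := hf j (by omega) p (fun h => hp (hc.trans h))
        have hmul2 : i * b ≤ j * b := mul_le_mul_left (by omega) b
        exact ⟨le_trans hmul2 h2.1, h2.2⟩
      · have h1 := ih (by omega) p hc
        exact ⟨h1.1, by omega⟩

/-- Extend a chain by one more step. -/
lemma chain_extend {F : Type*} [AddCommGroup F] {n : ℕ} (C : Set (Fin n → F))
    (b τ k : ℕ) (c c' : Fin n → F) (h : ChainR C b τ k c) (hc' : c' ∈ C)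
    (hne : c ≠ c')
    (hsupp : ∀ j : Fin n, c j ≠ c' j → k * b ≤ (j : ℕ) ∧ (j : ℕ) < (k + 1) * b + τ) :
    ChainR C b τ (k + 1) c' := by
  obtain ⟨f, hfk, hmem, hlink⟩ := h
  refine ⟨fun i => if i ≤ k then f i else c', if_neg (by omega), ?_, ?_⟩
  · intro i hi
    by_cases h : i ≤ k
    · simpa [h] using hmem i h
    · simpa [h] using hc'
  · intro i hi
    by_cases h : i < k
    · have e1 : (if i ≤ k then f i else c') = f i := if_pos (by omega)
      have e2 : (if i + 1 ≤ k then f (i + 1) else c') = f (i + 1) := if_pos (by omega)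
      simp only [e1, e2]
      exact hlink i h
    · have hik : i = k := by omega
      subst hik
      have e1 : (if i ≤ i then f i else c') = f i := if_pos le_rfl
      have e2 : (if i + 1 ≤ i then f (i + 1) else c') = c' := if_neg (by omega)
      simp only [e1, e2]
      rw [hfk]
      exact ⟨hne, hsupp⟩

/-- Length of the longest chain (capped at `L`) ending at `c`. -/
noncomputable def chainH {F : Type*} [AddCommGroup F] {n : ℕ} (C : Set (Fin n → F))
    (b τ L : ℕ) (c : Fin n → F) : ℕ :=
  @Nat.findGreatest (fun m => ChainR C b τ m c) (Classical.decPred _) L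

lemma chainH_le {F : Type*} [AddCommGroup F] {n : ℕ} (C : Set (Fin n → F))
    (b τ L : ℕ) (c : Fin n → F) : chainH C b τ L c ≤ L := by
  unfold chainH; exact @Nat.findGreatest_le _ (Classical.decPred _) L

lemma chainH_spec {F : Type*} [AddCommGroup F] {n : ℕ} (C : Set (Fin n → F))
    (b τ L : ℕ) (c : Fin n → F) (hc : c ∈ C) :
    ChainR C b τ (chainH C b τ L c) c := by
  unfold chainH
  exact @Nat.findGreatest_spec 0 (fun m => ChainR C b τ m c) (Classical.decPred _) L (Nat.zero_le L)
    ⟨fun _ => c, rfl, fun i _ => hc, fun i hi => absurd hi (Nat.not_lt_zero i)⟩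

lemma chainH_ge {F : Type*} [AddCommGroup F] {n : ℕ} (C : Set (Fin n → F))
    (b τ L m : ℕ) (c : Fin n → F) (hm : m ≤ L) (h : ChainR C b τ m c) :
    m ≤ chainH C b τ L c := by
  unfold chainH; exact @Nat.le_findGreatest _ _ (Classical.decPred _) _ hm h

/-- The index map `Fin m → Fin n` skipping the window `[s, s+w)`. -/
def pidx (w s m n : ℕ) (hm : m + w = n) (i : Fin m) : Fin n :=
  if h : (i : ℕ) < s then ⟨(i : ℕ), by omega⟩
  else ⟨(i : ℕ) + w, by have := i.isLt; omega⟩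

/-- Projection forgetting the coordinates in the window `[s, s+w)`. -/
def wproj {F : Type*} {n : ℕ} (w s m : ℕ) (hm : m + w = n) (c : Fin n → F)
    (i : Fin m) : F :=
  c (pidx w s m n hm i)

lemma wproj_eq_of {F : Type*} {n : ℕ} (w s m : ℕ) (hm : m + w = n) (hsm : s ≤ m)
    {c c' : Fin n → F} (h : wproj w s m hm c = wproj w s m hm c')
    (j : Fin n) (hj : (j : ℕ) < s ∨ s + w ≤ (j : ℕ)) : c j = c' j := by
  rcases hj with hj | hj
  · have hjm : (j : ℕ) < m := lt_of_lt_of_le hj hsm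
    have h2 := congrFun h ⟨(j : ℕ), hjm⟩
    have e : pidx w s m n hm ⟨(j : ℕ), hjm⟩ = j := by
      unfold pidx
      rw [dif_pos (show (j : ℕ) < s from hj)]
    unfold wproj at h2
    rwa [e] at h2
  · have hw : w ≤ (j : ℕ) := by omega
    have hjn : (j : ℕ) < n := j.isLt
    have hjm : (j : ℕ) - w < m := by omega
    have h2 := congrFun h ⟨(j : ℕ) - w, hjm⟩
    have e : pidx w s m n hm ⟨(j : ℕ) - w, hjm⟩ = j := by
      unfold pidx
      rw [dif_neg (show ¬((j : ℕ) - w < s) from by omega)]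
      exact Fin.ext (show (j : ℕ) - w + w = (j : ℕ) from by omega)
    unfold wproj at h2
    rwa [e] at h2

/- ====================  The theorem  ==================== -/

/-- generalized Reiger bound for general codes.
If a code `C` of length `n` over an alphabet of size `q ≥ 2`, with `ℓ ∣ τ`,
`ℓ > 1`, `2τ ≤ n`, has a decoder detecting any single `τ`-burst error and an
`(ℓ,τ)`-burst list decoder, then `|C| < ℓ · q^{n - (1+1/ℓ)τ}`, i.e. the
redundancy satisfies `r > (1 + 1/ℓ)τ - log_q ℓ`. -/
theorem generalized_Reiger_general (F : Type*) [AddCommGroup F] [Fintype F]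
    (n τ ℓ : ℕ) (hq : 2 ≤ Fintype.card F) (hτ : 1 ≤ τ)
    (h1a : ℓ ∣ τ) (h1b : 1 < ℓ) (h1c : 2 * τ ≤ n)
    (C : Set (Fin n → F))
    (h2 : HasBurstDetector C τ)
    (h3 : HasBurstListDecoder C ℓ τ) :
    C.ncard < ℓ * Fintype.card F ^ (n - (τ + τ / ℓ)) := by
  classical
  obtain ⟨D0, hD0sub, hD0det⟩ := h2
  obtain ⟨D, hDsub, hDcard, hDcor⟩ := h3
  set b := τ / ℓ with hbdef
  have hτℓ : τ = ℓ * b := (Nat.mul_div_cancel' h1a).symm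
  have hb1 : 1 ≤ b := by
    rcases Nat.eq_zero_or_pos b with h | h
    · rw [h, Nat.mul_zero] at hτℓ; omega
    · exact h
  have hbτ : b ≤ τ := by
    calc b = 1 * b := (one_mul b).symm
    _ ≤ ℓ * b := mul_le_mul_left (by omega) b
    _ = τ := hτℓ.symm
  -- (a): distinct codewords never differ by a τ-burst
  have ha : ∀ c ∈ C, ∀ c' ∈ C, c ≠ c' → ¬ IsBurst τ (c' - c) := by
    intro c hc c' hc' hne hburst
    have hne0 : c' - c ≠ 0 := sub_ne_zero.mpr (Ne.symm hne)
    have h1 := (hD0det c hc (c' - c) hburst).2 hne0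
    have h2' := (hD0det c' hc' 0 ⟨0, fun j hj => absurd rfl hj⟩).1 rfl
    rw [add_zero] at h2'
    rw [show c + (c' - c) = c' from by abel] at h1
    rw [h1] at h2'
    exact Finset.singleton_ne_empty c' h2'.symm
  -- (b): no ℓ+1 distinct codewords at burst distance from a common word
  have hlist : ∀ (y : Fin n → F) (S : Finset (Fin n → F)), ↑S ⊆ C →
      (∀ c ∈ S, IsBurst τ (y - c)) → S.card ≤ ℓ := by
    intro y S hS hbur
    have hsub : S ⊆ D y := by
      intro c hcS
      have := hDcor c (hS hcS) (y - c) (hbur c hcS)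
      rwa [show c + (y - c) = y from by abel] at this
    exact le_trans (Finset.card_le_card hsub) (hDcard y)
  -- no chain of length ℓ
  have hnc : ∀ c, ¬ ChainR C b τ ℓ c := by
    rintro c ⟨f, hfl, hmem, hlink⟩
    have cross := chain_cross b τ f ℓ (fun i hi => (hlink i hi).2)
    have hdist : ∀ i j, i < j → j ≤ ℓ → f i ≠ f j := by
      intro i j hij hjl heq
      by_cases h2 : j = i + 1
      · exact (hlink i (by omega)).1 (by rw [heq, h2])
      · have h2 : i + 1 < j := by omega
        refine ha (f i) (hmem i (by omega)) (f (i + 1)) (hmem (i + 1) (by omega))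
          ((hlink i (by omega)).1) ⟨(i + 1) * b, ?_⟩
        intro p hp
        have hp' : f (i + 1) p ≠ f i p := sub_ne_zero.mp (by simpa using hp)
        have hij' : f (i + 1) p ≠ f j p := by rw [← heq]; exact hp'
        have b1 := cross (i + 1) j h2 hjl p hij'
        have b2 := (hlink i (by omega)).2 p (Ne.symm hp')
        exact ⟨b1.1, b2.2⟩

    set y : Fin n → F := fun p => if (p : ℕ) < τ then f ℓ p else f 0 p with hy
    have hbur : ∀ k ≤ ℓ, IsBurst τ (y - f k) := by
      intro k hk
      refine ⟨k * b, ?_⟩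
      intro p hp
      have hp' : y p ≠ f k p := sub_ne_zero.mp (by simpa using hp)
      by_cases hpτ : (p : ℕ) < τ
      · have hyp : y p = f ℓ p := by simp [hy, hpτ]
        have hkℓ : k < ℓ := by
          rcases eq_or_lt_of_le hk with h | h
          · exact absurd (by rw [h]; exact hyp) hp'
          · exact h
        have hc := cross k ℓ hkℓ le_rfl p (by rw [hyp] at hp'; exact Ne.symm hp')
        exact ⟨hc.1, by omega⟩
      · have hyp : y p = f 0 p := by simp [hy, hpτ]
        have hk0 : 0 < k := by
          rcases Nat.eq_zero_or_pos k with h | h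
          · exact absurd (by rw [h]; exact hyp) hp'
          · exact h
        have hc := cross 0 k hk0 hk p (by rw [hyp] at hp'; exact hp')
        have h1 : k * b ≤ ℓ * b := mul_le_mul_left hk b
        exact ⟨by omega, hc.2⟩
    have hinj : Function.Injective (fun i : Fin (ℓ + 1) => f (i : ℕ)) := by
      intro i j hije
      by_contra hne
      have hne' : (i : ℕ) ≠ (j : ℕ) := fun h => hne (Fin.ext h)
      rcases Ne.lt_or_gt hne' with h | h
      · exact hdist _ _ h (by omega) hije
      · exact hdist _ _ h (by omega) hije.symm
    have hcard := hlist y (Finset.image (fun i : Fin (ℓ + 1) => f (i : ℕ)) Finset.univ)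
      (by
        intro x hx
        rw [Finset.mem_coe, Finset.mem_image] at hx
        obtain ⟨i, _, rfl⟩ := hx
        exact hmem (i : ℕ) (by omega))
      (by
        intro x hx
        rw [Finset.mem_image] at hx
        obtain ⟨i, _, rfl⟩ := hx
        exact hbur (i : ℕ) (by omega))
    rw [Finset.card_image_of_injective _ hinj, Finset.card_univ, Fintype.card_fin] at hcard
    omega
  -- set up the projection counting
  have hmsum : (n - (τ + b)) + (τ + b) = n := by omega
  set m : ℕ := n - (τ + b) with hmdef
  -- key extension step via the projection
  have hkey : ∀ k, k < ℓ → ∀ c ∈ C, ∀ c' ∈ C, c ≠ c' → ChainR C b τ k c →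
      wproj (τ + b) (k * b) m hmsum c = wproj (τ + b) (k * b) m hmsum c' →
      ChainR C b τ (k + 1) c' := by
    intro k hk c hc c' hc' hne hchain hproj
    have hsm : k * b ≤ m := by
      have h5 : k * b + b ≤ τ := by
        calc k * b + b = (k + 1) * b := by ring
        _ ≤ ℓ * b := mul_le_mul_left (by omega) b
        _ = τ := hτℓ.symm
      omega
    apply chain_extend C b τ k c c' hchain hc' hne
    intro j hj
    by_contra hcon
    apply hj
    rcases not_and_or.mp hcon with h | h
    · exact wproj_eq_of (τ + b) (k * b) m hmsum hsm hproj j (Or.inl (Nat.lt_of_not_le h))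
    · have h' := Nat.le_of_not_lt h
      rw [show (k + 1) * b + τ = k * b + (τ + b) from by ring] at h'
      exact wproj_eq_of (τ + b) (k * b) m hmsum hsm hproj j (Or.inr h')
  -- stratification by chainH
  have hCfin : C.Finite := Set.toFinite C
  set Cf : Finset (Fin n → F) := hCfin.toFinset with hCf
  set H : (Fin n → F) → ℕ := fun c => chainH C b τ (ℓ - 1) c with hH
  have hmemC : ∀ c ∈ Cf, c ∈ C := fun c hc => (Set.Finite.mem_toFinset hCfin).mp hc
  set Q : ℕ := Fintype.card F ^ m with hQdef
  have hQuniv : Fintype.card (Fin m → F) = Q := by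
    rw [Fintype.card_fun, Fintype.card_fin]
  -- each stratum injects into F^m
  have hstratinj : ∀ k, k < ℓ →
      Set.InjOn (wproj (τ + b) (k * b) m hmsum)
        ((Cf.filter (fun c => H c = k) : Finset (Fin n → F)) : Set (Fin n → F)) := by
    intro k hk c hcm c' hcm' hpe
    by_contra hne
    rw [Finset.mem_coe, Finset.mem_filter] at hcm hcm'
    have hcC : c ∈ C := hmemC c hcm.1
    have hcC' : c' ∈ C := hmemC c' hcm'.1
    have hchain : ChainR C b τ k c := by
      have := chainH_spec C b τ (ℓ - 1) c hcC
      rwa [show chainH C b τ (ℓ - 1) c = k from hcm.2] at this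
    have hext := hkey k hk c hcC c' hcC' hne hchain hpe
    by_cases he : k + 1 = ℓ
    · exact hnc c' (by rwa [he] at hext)
    · have hge := chainH_ge C b τ (ℓ - 1) (k + 1) c' (by omega) hext
      have : H c' = k := hcm'.2
      simp only [hH] at this
      omega
  have hfiber : ∀ k, k < ℓ → (Cf.filter (fun c => H c = k)).card ≤ Q := by
    intro k hk
    have := Finset.card_le_card_of_injOn (wproj (τ + b) (k * b) m hmsum)
      (fun a _ => Finset.mem_univ _) (hstratinj k hk)
    rwa [Finset.card_univ, hQuniv] at this
  have hsum : Cf.card = ∑ k ∈ Finset.range ℓ, (Cf.filter (fun c => H c = k)).card := by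
    apply Finset.card_eq_sum_card_fiberwise
    intro c _
    rw [Finset.mem_coe, Finset.mem_range]
    have := chainH_le C b τ (ℓ - 1) c
    simp only [hH]
    omega
  have hQ1 : 1 ≤ Q := Nat.one_le_iff_ne_zero.mpr (pow_ne_zero m (by omega))
  -- final argument
  rw [Set.ncard_eq_toFinset_card C hCfin, ← hCf]
  by_contra hge
  push_neg at hge
  -- every stratum has exactly Q elements
  have hQall : ∀ k, k < ℓ → Q ≤ (Cf.filter (fun c => H c = k)).card := by
    intro k hk
    by_contra hlt
    push_neg at hlt
    have hlt2 : Cf.card < ℓ * Q := by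
      rw [hsum]
      calc ∑ k ∈ Finset.range ℓ, (Cf.filter (fun c => H c = k)).card
          < ∑ _k ∈ Finset.range ℓ, Q := by
            refine Finset.sum_lt_sum (fun i hi => hfiber i (Finset.mem_range.mp hi)) ?_
            exact ⟨k, Finset.mem_range.mpr hk, hlt⟩
        _ = ℓ * Q := by rw [Finset.sum_const, Finset.card_range, smul_eq_mul]
    omega
  have hℓ1 : ℓ - 1 < ℓ := by omega
  -- the top stratum surjects onto F^m
  have himg : (Cf.filter (fun c => H c = ℓ - 1)).image
      (wproj (τ + b) ((ℓ - 1) * b) m hmsum) = Finset.univ := by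
    apply Finset.eq_univ_of_card
    rw [Finset.card_image_of_injOn (hstratinj (ℓ - 1) hℓ1), hQuniv]
    exact le_antisymm (hfiber (ℓ - 1) hℓ1) (hQall (ℓ - 1) hℓ1)
  -- the bottom stratum is nonempty
  have h0 : ∃ c0, c0 ∈ Cf.filter (fun c => H c = 0) := by
    have := hQall 0 (by omega)
    have hpos : 0 < (Cf.filter (fun c => H c = 0)).card := by omega
    exact Finset.card_pos.mp hpos
  obtain ⟨c0, hc0⟩ := h0
  rw [Finset.mem_filter] at hc0
  have hc0C : c0 ∈ C := hmemC c0 hc0.1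
  have : wproj (τ + b) ((ℓ - 1) * b) m hmsum c0 ∈
      (Cf.filter (fun c => H c = ℓ - 1)).image (wproj (τ + b) ((ℓ - 1) * b) m hmsum) := by
    rw [himg]; exact Finset.mem_univ _
  rw [Finset.mem_image] at this
  obtain ⟨s, hsS, hse⟩ := this
  rw [Finset.mem_filter] at hsS
  have hsC : s ∈ C := hmemC s hsS.1
  have hsne : s ≠ c0 := by
    intro h
    have h1 : H s = ℓ - 1 := hsS.2
    have h2 : H c0 = 0 := hc0.2
    rw [h] at h1
    omega
  have hschain : ChainR C b τ (ℓ - 1) s := by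
    have := chainH_spec C b τ (ℓ - 1) s hsC
    rwa [show chainH C b τ (ℓ - 1) s = ℓ - 1 from hsS.2] at this
  have hext := hkey (ℓ - 1) hℓ1 s hsC c0 hc0C hsne hschain hse
  rw [show ℓ - 1 + 1 = ℓ from by omega] at hext
  exact hnc c0 hext
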